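/- In the Much Ado About Knotting game on the twist-knot model with n ≥ 1 twist precrossings, the first player has a winning strategy. -/

import Mathlib

/-- The sign of a crossing resolution: `true ↦ +1`, `false ↦ -1`. -/
def sgn (b : Bool) : ℤ := if b then 1 else -1

/-- Sum of the signs of the `n` twist crossings (indices `0, …, n-1`). -/
def twistSum (n : ℕ) (f : Fin (n + 2) → Bool) : ℤ :=
  ∑ i : Fin n, sgn (f (Fin.castLE (by omega) i))

/-- A full resolution of the twist-knot shadow with `n` twist precrossings and two clasp
precrossings (indices `n` and `n+1`) is knotted iff the clasp signs agree and the twist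
sum either has absolute value `≥ 2` or equals the common clasp sign. -/
def Knotted (n : ℕ) (f : Fin (n + 2) → Bool) : Prop :=
  f ⟨n, by omega⟩ = f ⟨n + 1, by omega⟩ ∧
    (2 ≤ |twistSum n f| ∨ twistSum n f = sgn (f ⟨n, by omega⟩))

/-- Partial resolutions: each of the `k` crossings is unresolved (`none`) or carries a sign. -/
abbrev PartialRes (k : ℕ) := Fin k → Option Bool

/-- `Force A fuel moverIsForcer p` : with `fuel` moves remaining from position `p`, the
player whose winning condition on full resolutions is `A` can force the game (in which the
two players alternately pick a still-unresolved crossing and assign it a sign of their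
choice) to end in a full resolution satisfying `A`.  This backward-induction predicate is
equivalent to the existence of a winning strategy in the finite game. -/
def Force {k : ℕ} (A : (Fin k → Bool) → Prop) : ℕ → Bool → PartialRes k → Prop
  | 0, _, p => ∃ f : Fin k → Bool, (∀ i, p i = some (f i)) ∧ A f
  | m + 1, true, p => ∃ i, p i = none ∧ ∃ s : Bool,
      Force A m false (Function.update p i (some s))
  | m + 1, false, p => ∀ i, p i = none → ∀ s : Bool,
      Force A m true (Function.update p i (some s))

/-- The totally unresolved shadow. -/
def emptyRes (k : ℕ) : PartialRes k := fun _ => none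

/-- `f` extends the partial resolution `p`. -/
def Extends {k : ℕ} (p : PartialRes k) (f : Fin k → Bool) : Prop :=
  ∀ i b, p i = some b → f i = b

/-- A partial resolution is determined if all full resolutions extending it have the same
knotted-status. -/
def Determined (n : ℕ) (p : PartialRes (n + 2)) : Prop :=
  ∀ f g : Fin (n + 2) → Bool, Extends p f → Extends p g → (Knotted n f ↔ Knotted n g)

/-- `MaakWins n fuel s p` : in Much Ado About Knotting on the twist-knot shadow with `n`
twist precrossings, from the partial resolution `p` with `fuel` unresolved crossings
remaining, the player to move — who is only allowed to resolve a crossing with the sign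
`s` — has a winning strategy.  A player loses if the partial resolution is determined
immediately after their move; a move is winning if it leaves the position undetermined and
the opponent (playing the sign `!s`) has no winning reply. -/
def MaakWins (n : ℕ) : ℕ → Bool → PartialRes (n + 2) → Prop
  | 0, _, _ => False
  | fuel + 1, s, p => ∃ i, p i = none ∧
      ¬ Determined n (Function.update p i (some s)) ∧
      ¬ MaakWins n fuel (!s) (Function.update p i (some s))

/-! ### Auxiliary machinery -/

def cIdx1 (n : ℕ) : Fin (n + 2) := ⟨n, by omega⟩
def cIdx2 (n : ℕ) : Fin (n + 2) := ⟨n + 1, by omega⟩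
def tIdx (n : ℕ) (i : Fin n) : Fin (n + 2) := Fin.castLE (by omega) i

def osgn : Option Bool → ℤ := fun o => o.elim 0 sgn
def ofree : Option Bool → ℤ := fun o => if o = none then 1 else 0

def partSum (n : ℕ) (p : PartialRes (n + 2)) : ℤ := ∑ i : Fin n, osgn (p (tIdx n i))
def freeCnt (n : ℕ) (p : PartialRes (n + 2)) : ℤ := ∑ i : Fin n, ofree (p (tIdx n i))

lemma twistSum_eq (n : ℕ) (f : Fin (n + 2) → Bool) :
    twistSum n f = ∑ i : Fin n, sgn (f (tIdx n i)) := rfl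

lemma knotted_iff (n : ℕ) (f : Fin (n + 2) → Bool) :
    Knotted n f ↔ f (cIdx1 n) = f (cIdx2 n) ∧
      (2 ≤ |twistSum n f| ∨ twistSum n f = sgn (f (cIdx1 n))) := Iff.rfl

lemma sgn_not (s : Bool) : sgn (!s) = -sgn s := by cases s <;> simp [sgn]

lemma c1_ne_c2 (n : ℕ) : cIdx1 n ≠ cIdx2 n := by simp [cIdx1, cIdx2, Fin.ext_iff]

lemma cIdx1_val (n : ℕ) : (cIdx1 n : ℕ) = n := rfl
lemma cIdx2_val (n : ℕ) : (cIdx2 n : ℕ) = n + 1 := rfl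
lemma tIdx_val (n : ℕ) (i : Fin n) : (tIdx n i : ℕ) = (i : ℕ) := rfl

lemma c1_ne_tIdx (n : ℕ) (i : Fin n) : cIdx1 n ≠ tIdx n i :=
  Fin.ne_of_val_ne (by rw [tIdx_val, cIdx1_val]; have := i.isLt; omega)

lemma c2_ne_tIdx (n : ℕ) (i : Fin n) : cIdx2 n ≠ tIdx n i :=
  Fin.ne_of_val_ne (by rw [tIdx_val, cIdx2_val]; have := i.isLt; omega)

lemma sum_update_twist (n : ℕ) (h : Option Bool → ℤ) (p : PartialRes (n + 2))
    (j : Fin (n + 2)) (hj : (j : ℕ) < n) (v : Option Bool) :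
    ∑ i : Fin n, h (Function.update p j v (tIdx n i)) =
      (∑ i : Fin n, h (p (tIdx n i))) + (h v - h (p j)) := by
  set i₀ : Fin n := ⟨j, hj⟩ with hi₀
  have hti : tIdx n i₀ = j := by simp [tIdx, Fin.ext_iff, hi₀]
  have key : ∀ i : Fin n, i ≠ i₀ → h (Function.update p j v (tIdx n i)) = h (p (tIdx n i)) := by
    intro i hi
    rw [Function.update_of_ne]
    intro hc
    apply hi
    apply Fin.ext
    have : (tIdx n i : ℕ) = (j : ℕ) := by rw [hc]
    rw [tIdx_val] at this
    exact this
  rw [← Finset.add_sum_erase _ _ (Finset.mem_univ i₀),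
      ← Finset.add_sum_erase _ (fun i => h (p (tIdx n i))) (Finset.mem_univ i₀),
      Finset.sum_congr rfl (fun i hi => key i (Finset.ne_of_mem_erase hi)),
      hti, Function.update_self]
  ring

lemma sum_update_clasp (n : ℕ) (h : Option Bool → ℤ) (p : PartialRes (n + 2))
    (j : Fin (n + 2)) (hj : n ≤ (j : ℕ)) (v : Option Bool) :
    ∑ i : Fin n, h (Function.update p j v (tIdx n i)) =
      ∑ i : Fin n, h (p (tIdx n i)) := by
  refine Finset.sum_congr rfl fun i _ => ?_
  rw [Function.update_of_ne]
  intro hc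
  have h' : (tIdx n i : ℕ) = (j : ℕ) := by rw [hc]
  rw [tIdx_val] at h'
  have := i.isLt
  omega

lemma partSum_update_twist (n : ℕ) (p : PartialRes (n + 2)) (j : Fin (n + 2))
    (hj : (j : ℕ) < n) (hpj : p j = none) (b : Bool) :
    partSum n (Function.update p j (some b)) = partSum n p + sgn b := by
  unfold partSum
  rw [sum_update_twist n osgn p j hj (some b), hpj]
  simp [osgn]

lemma freeCnt_update_twist (n : ℕ) (p : PartialRes (n + 2)) (j : Fin (n + 2))
    (hj : (j : ℕ) < n) (hpj : p j = none) (b : Bool) :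
    freeCnt n (Function.update p j (some b)) = freeCnt n p - 1 := by
  unfold freeCnt
  rw [sum_update_twist n ofree p j hj (some b), hpj]
  simp [ofree]
  ring

lemma partSum_update_clasp (n : ℕ) (p : PartialRes (n + 2)) (j : Fin (n + 2))
    (hj : n ≤ (j : ℕ)) (v : Option Bool) :
    partSum n (Function.update p j v) = partSum n p :=
  sum_update_clasp n osgn p j hj v

lemma freeCnt_update_clasp (n : ℕ) (p : PartialRes (n + 2)) (j : Fin (n + 2))
    (hj : n ≤ (j : ℕ)) (v : Option Bool) :
    freeCnt n (Function.update p j v) = freeCnt n p :=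
  sum_update_clasp n ofree p j hj v

lemma exists_free_twist (n : ℕ) (p : PartialRes (n + 2)) (h : freeCnt n p ≠ 0) :
    ∃ i : Fin n, p (tIdx n i) = none := by
  by_contra hc
  push_neg at hc
  apply h
  unfold freeCnt
  refine Finset.sum_eq_zero fun i _ => ?_
  simp only [ofree, if_neg (hc i)]

lemma twistSum_of_full (n : ℕ) (p : PartialRes (n + 2)) (h : freeCnt n p = 0)
    (f : Fin (n + 2) → Bool) (hf : Extends p f) :
    twistSum n f = partSum n p := by
  rw [twistSum_eq]
  unfold partSum
  refine Finset.sum_congr rfl fun i _ => ?_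
  rcases hpi : p (tIdx n i) with _ | b
  · exfalso
    have h0 : ∀ j ∈ Finset.univ, (0:ℤ) ≤ ofree (p (tIdx n j)) := by
      intro j _; unfold ofree; split <;> norm_num
    have := (Finset.sum_eq_zero_iff_of_nonneg h0).1 h i (Finset.mem_univ i)
    rw [hpi] at this; simp [ofree] at this
  · rw [hf _ _ hpi]; rfl

/-- Filling all unresolved crossings with a constant sign. -/
def fill (n : ℕ) (p : PartialRes (n + 2)) (c : Bool) : Fin (n + 2) → Bool :=
  fun i => (p i).getD c

lemma extends_fill (n : ℕ) (p : PartialRes (n + 2)) (c : Bool) : Extends p (fill n p c) := by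
  intro i b h; simp [fill, h]

lemma twistSum_fill (n : ℕ) (p : PartialRes (n + 2)) (c : Bool) :
    twistSum n (fill n p c) = partSum n p + sgn c * freeCnt n p := by
  rw [twistSum_eq]
  unfold partSum freeCnt
  rw [Finset.mul_sum, ← Finset.sum_add_distrib]
  refine Finset.sum_congr rfl fun i _ => ?_
  rcases hpi : p (tIdx n i) with _ | b <;> simp [fill, hpi, osgn, ofree]

lemma fill_c1 (n : ℕ) (p : PartialRes (n + 2)) (c s : Bool) (h : p (cIdx1 n) = some s) :
    fill n p c (cIdx1 n) = s := by simp [fill, h]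

lemma fill_c2_some (n : ℕ) (p : PartialRes (n + 2)) (c s : Bool) (h : p (cIdx2 n) = some s) :
    fill n p c (cIdx2 n) = s := by simp [fill, h]

lemma fill_c2_none (n : ℕ) (p : PartialRes (n + 2)) (c : Bool) (h : p (cIdx2 n) = none) :
    fill n p c (cIdx2 n) = c := by simp [fill, h]

lemma det_of_all_not (n : ℕ) (p : PartialRes (n + 2))
    (h : ∀ f, Extends p f → ¬ Knotted n f) : Determined n p := by
  intro f g hf hg
  exact iff_of_false (h f hf) (h g hg)

lemma det_of_all (n : ℕ) (p : PartialRes (n + 2))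
    (h : ∀ f, Extends p f → Knotted n f) : Determined n p := by
  intro f g hf hg
  exact iff_of_true (h f hf) (h g hg)

/-- B1: clasps resolved with opposite signs ⇒ determined (all unknotted). -/
lemma det_clasps_ne (n : ℕ) (p : PartialRes (n + 2)) (a b : Bool) (hab : a ≠ b)
    (h1 : p (cIdx1 n) = some a) (h2 : p (cIdx2 n) = some b) : Determined n p := by
  refine det_of_all_not n p fun f hf hk => ?_
  rw [knotted_iff] at hk
  rw [hf _ _ h1, hf _ _ h2] at hk
  exact hab hk.1

/-- B2: first clasp `s`, no free twists, twist sum `0` or `-sgn s` ⇒ determined. -/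
lemma det_small_sum (n : ℕ) (p : PartialRes (n + 2)) (s : Bool)
    (h1 : p (cIdx1 n) = some s) (hf : freeCnt n p = 0)
    (hS : partSum n p = 0 ∨ partSum n p = -sgn s) : Determined n p := by
  refine det_of_all_not n p fun f hext hk => ?_
  rw [knotted_iff] at hk
  have hT := twistSum_of_full n p hf f hext
  have h1' := hext _ _ h1
  rw [h1'] at hk
  rcases hk with ⟨-, h2 | h2⟩ <;> rw [hT] at h2 <;>
    rcases hS with hS | hS <;> rw [hS] at h2 <;> cases s <;> simp [sgn] at h2 <;> omega

/-- B3: clasps both `s`, no free twists, twist sum `-2·sgn s` ⇒ determined (all knotted). -/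
lemma det_big_sum (n : ℕ) (p : PartialRes (n + 2)) (s : Bool)
    (h1 : p (cIdx1 n) = some s) (h2 : p (cIdx2 n) = some s) (hf : freeCnt n p = 0)
    (hS : partSum n p = -2 * sgn s) : Determined n p := by
  refine det_of_all n p fun f hext => ?_
  rw [knotted_iff]
  have hT := twistSum_of_full n p hf f hext
  refine ⟨by rw [hext _ _ h1, hext _ _ h2], Or.inl ?_⟩
  rw [hT, hS]
  cases s <;> simp [sgn]

/-- A1: first clasp `s`, second free, twist sum `0`, at least one free twist ⇒ undetermined. -/
lemma undet_one_clasp (n : ℕ) (p : PartialRes (n + 2)) (s : Bool) (u : ℕ) (hu : 1 ≤ u)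
    (h1 : p (cIdx1 n) = some s) (h2 : p (cIdx2 n) = none)
    (hfc : freeCnt n p = u) (hS : partSum n p = 0) : ¬ Determined n p := by
  intro hdet
  have hg : Knotted n (fill n p s) := by
    rw [knotted_iff, fill_c1 n p s s h1, fill_c2_none n p s h2]
    refine ⟨rfl, ?_⟩
    rw [twistSum_fill, hS, hfc]
    rcases eq_or_lt_of_le hu with h | h
    · right; rw [← h]; simp
    · left; cases s <;> simp [sgn] <;> omega
  have hfk : ¬ Knotted n (fill n p (!s)) := by
    rw [knotted_iff, fill_c1 n p (!s) s h1, fill_c2_none n p (!s) h2]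
    intro hk
    exact absurd hk.1 (by cases s <;> decide)
  exact hfk ((hdet _ _ (extends_fill n p (!s)) (extends_fill n p s)).2 hg)

/-- A2: clasps both `s`, one free twist, twist sum `-sgn s` ⇒ undetermined. -/
lemma undet_two_clasps (n : ℕ) (p : PartialRes (n + 2)) (s : Bool)
    (h1 : p (cIdx1 n) = some s) (h2 : p (cIdx2 n) = some s)
    (hfc : freeCnt n p = 1) (hS : partSum n p = -sgn s) : ¬ Determined n p := by
  intro hdet
  have hg : Knotted n (fill n p (!s)) := by
    rw [knotted_iff, fill_c1 n p (!s) s h1, fill_c2_some n p (!s) s h2]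
    refine ⟨rfl, Or.inl ?_⟩
    rw [twistSum_fill, hS, hfc, sgn_not]
    cases s <;> simp [sgn]
  have hfk : ¬ Knotted n (fill n p s) := by
    rw [knotted_iff, fill_c1 n p s s h1, fill_c2_some n p s s h2]
    rintro ⟨-, hk | hk⟩ <;>
      rw [twistSum_fill, hS, hfc] at hk <;> cases s <;> simp [sgn] at hk <;> omega
  exact hfk ((hdet _ _ (extends_fill n p s) (extends_fill n p (!s))).2 hg)

/-- Endgame: clasps both `s`, one free twist, twist sum `-sgn s`, opponent to move loses. -/
lemma endgame (n : ℕ) (s : Bool) (p : PartialRes (n + 2))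
    (h1 : p (cIdx1 n) = some s) (h2 : p (cIdx2 n) = some s)
    (hfc : freeCnt n p = 1) (hS : partSum n p = -sgn s) :
    ¬ MaakWins n 1 (!s) p := by
  rw [show (1:ℕ) = 0 + 1 from rfl, MaakWins]
  rintro ⟨i, hi, hnd, -⟩
  apply hnd
  have hilt : (i : ℕ) < n := by
    rcases lt_trichotomy (i : ℕ) n with h | h | h
    · exact h
    · exfalso
      have hieq : i = cIdx1 n := Fin.ext (by rw [cIdx1_val]; exact h)
      rw [hieq, h1] at hi; exact absurd hi (by simp)
    · exfalso
      have hieq : i = cIdx2 n := Fin.ext (by rw [cIdx2_val]; have := i.isLt; omega)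
      rw [hieq, h2] at hi; exact absurd hi (by simp)
  refine det_big_sum n _ s ?_ ?_ ?_ ?_
  · rw [Function.update_of_ne (show cIdx1 n ≠ i from fun h => by
        rw [← h, h1] at hi; exact absurd hi (by simp)), h1]
  · rw [Function.update_of_ne (show cIdx2 n ≠ i from fun h => by
        rw [← h, h2] at hi; exact absurd hi (by simp)), h2]
  · rw [freeCnt_update_twist n p i hilt hi, hfc]; ring
  · rw [partSum_update_twist n p i hilt hi, hS, sgn_not]; ring

/-- Main induction: first clasp `s`, second free, twist sum `0`, `u ≥ 1` free twists,
opponent (sign `!s`) to move with fuel `u + 1` loses. -/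
lemma opp_loses (n : ℕ) (s : Bool) : ∀ u : ℕ, 1 ≤ u → ∀ p : PartialRes (n + 2),
    p (cIdx1 n) = some s → p (cIdx2 n) = none →
    freeCnt n p = u → partSum n p = 0 → ¬ MaakWins n (u + 1) (!s) p := by
  intro u
  induction u using Nat.strong_induction_on with
  | _ u IH =>
  intro hu p h1 h2 hfc hS hM
  rw [MaakWins] at hM
  obtain ⟨i, hi, hnd, hnw⟩ := hM
  rw [Bool.not_not] at hnw
  have hine1 : i ≠ cIdx1 n := by intro h; rw [h, h1] at hi; exact absurd hi (by simp)
  rcases lt_or_ge (i : ℕ) n with hilt | hige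
  · -- opponent resolved a twist
    set q := Function.update p i (some (!s)) with hq
    have hq1 : q (cIdx1 n) = some s := by rw [hq, Function.update_of_ne hine1.symm, h1]
    have hq2 : q (cIdx2 n) = none := by
      rw [hq, Function.update_of_ne (show cIdx2 n ≠ i from fun h => by
        have : (i : ℕ) = n + 1 := by rw [← h, cIdx2_val]
        omega), h2]
    have hqf : freeCnt n q = (u : ℤ) - 1 := by
      rw [hq, freeCnt_update_twist n p i hilt hi, hfc]
    have hqS : partSum n q = -sgn s := by
      rw [hq, partSum_update_twist n p i hilt hi, hS, sgn_not]; ring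
    rcases eq_or_lt_of_le hu with h | hu2
    · -- u = 1 : opponent's move was determined
      apply hnd
      refine det_small_sum n q s hq1 ?_ (Or.inr hqS)
      rw [hqf, ← h]; ring
    · -- u ≥ 2 : we have a winning reply
      apply hnw
      obtain ⟨v, rfl⟩ : ∃ v, u = v + 2 := ⟨u - 2, by omega⟩
      rw [MaakWins]
      rcases Nat.eq_zero_or_pos v with rfl | hv
      · -- u = 2 : play the second clasp
        refine ⟨cIdx2 n, hq2, ?_, ?_⟩
        · refine undet_two_clasps n _ s ?_ ?_ ?_ ?_
          · rw [Function.update_of_ne (c1_ne_c2 n), hq1]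
          · rw [Function.update_self]
          · rw [freeCnt_update_clasp n q _ (by rw [cIdx2_val]; omega) _, hqf]; ring
          · rw [partSum_update_clasp n q _ (by rw [cIdx2_val]; omega) _, hqS]
        · refine endgame n s _ ?_ ?_ ?_ ?_
          · rw [Function.update_of_ne (c1_ne_c2 n), hq1]
          · rw [Function.update_self]
          · rw [freeCnt_update_clasp n q _ (by rw [cIdx2_val]; omega) _, hqf]; ring
          · rw [partSum_update_clasp n q _ (by rw [cIdx2_val]; omega) _, hqS]
      · -- u ≥ 3 : play a twist back
        obtain ⟨j, hj⟩ := exists_free_twist n q (by rw [hqf]; push_cast; omega)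
        have hjlt : (tIdx n j : ℕ) < n := by rw [tIdx_val]; exact j.isLt
        refine ⟨tIdx n j, hj, ?_, ?_⟩
        · refine undet_one_clasp n _ s v hv ?_ ?_ ?_ ?_
          · rw [Function.update_of_ne (c1_ne_tIdx n j), hq1]
          · rw [Function.update_of_ne (c2_ne_tIdx n j), hq2]
          · rw [freeCnt_update_twist n q _ hjlt hj, hqf]; push_cast; ring
          · rw [partSum_update_twist n q _ hjlt hj, hqS]; ring
        · refine IH v (by omega) hv _ ?_ ?_ ?_ ?_
          · rw [Function.update_of_ne (c1_ne_tIdx n j), hq1]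
          · rw [Function.update_of_ne (c2_ne_tIdx n j), hq2]
          · rw [freeCnt_update_twist n q _ hjlt hj, hqf]; push_cast; ring
          · rw [partSum_update_twist n q _ hjlt hj, hqS]; ring
  · -- opponent resolved the second clasp : determined, contradiction
    have hie : i = cIdx2 n := by
      apply Fin.ext
      rw [cIdx2_val]
      have h1lt := i.isLt
      have : (i : ℕ) ≠ n := fun h => hine1 (Fin.ext (by rw [cIdx1_val]; exact h))
      omega
    apply hnd
    refine det_clasps_ne n _ s (!s) (by cases s <;> simp) ?_ ?_
    · rw [Function.update_of_ne (by rw [hie]; exact c1_ne_c2 n), h1]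
    · rw [hie, Function.update_self]

lemma freeCnt_empty (n : ℕ) : freeCnt n (emptyRes (n + 2)) = n := by
  unfold freeCnt emptyRes ofree
  simp

lemma partSum_empty (n : ℕ) : partSum n (emptyRes (n + 2)) = 0 := by
  unfold partSum emptyRes osgn
  simp

/-- In Much Ado About Knotting on the twist-knot shadow with `n ≥ 1` twist precrossings,
the first player has a winning strategy — whichever of Portia (`s = true`, i.e. `+1`) or
Nerissa (`s = false`, i.e. `-1`) moves first. -/
theorem maak_first_player_wins (n : ℕ) (hn : 1 ≤ n) (s : Bool) :
    MaakWins n (n + 2) s (emptyRes (n + 2)) := by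
  show MaakWins n ((n + 1) + 1) s (emptyRes (n + 2))
  rw [MaakWins]
  refine ⟨cIdx1 n, rfl, ?_, ?_⟩
  · refine undet_one_clasp n _ s n hn (by rw [Function.update_self]) ?_ ?_ ?_
    · rw [Function.update_of_ne (c1_ne_c2 n).symm]; rfl
    · rw [freeCnt_update_clasp n _ _ (by rw [cIdx1_val]) _, freeCnt_empty]
    · rw [partSum_update_clasp n _ _ (by rw [cIdx1_val]) _, partSum_empty]
  · refine opp_loses n s n hn _ (by rw [Function.update_self]) ?_ ?_ ?_
    · rw [Function.update_of_ne (c1_ne_c2 n).symm]; rfl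
    · rw [freeCnt_update_clasp n _ _ (by rw [cIdx1_val]) _, freeCnt_empty]
    · rw [partSum_update_clasp n _ _ (by rw [cIdx1_val]) _, partSum_empty]
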